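/- Let p and q be probability mass functions on a countable type that are mutually absolutely continuous. Define g(λ) = E_{Y∼p, Y'∼q}[ℓ(λ·log(p(Y)/q(Y)) - λ·log(p(Y')/q(Y')))] where ℓ is differentiable at 0 with ℓ'(0) < 0. Then g'(0) = ℓ'(0)·(KL(p‖q) + KL(q‖p)), which is strictly negative whenever p ≠ q. -/

import Mathlib

/-- Derivative of `g(λ) = E_{Y∼p, Y'∼q}[ℓ(λ log(p(Y)/q(Y)) - λ log(p(Y')/q(Y')))]`
at `λ = 0` equals `ℓ'(0) · (KL(p‖q) + KL(q‖p))`, which is negative when `p ≠ q`. -/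
theorem spin_g_deriv_at_zero
    {α : Type*} [Fintype α]
    (p q : α → ℝ) (hp : ∀ y, 0 < p y) (hq : ∀ y, 0 < q y)
    (hp1 : ∑ y, p y = 1) (hq1 : ∑ y, q y = 1)
    (ℓ : ℝ → ℝ) (dl : ℝ) (hℓ : HasDerivAt ℓ dl 0) (hdl : dl < 0) :
    HasDerivAt (fun lam : ℝ => ∑ y, ∑ y', p y * q y' *
        ℓ (lam * Real.log (p y / q y) - lam * Real.log (p y' / q y')))
      (dl * ((∑ y, p y * Real.log (p y / q y)) + (∑ y, q y * Real.log (q y / p y)))) 0 ∧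
    (p ≠ q →
      dl * ((∑ y, p y * Real.log (p y / q y)) + (∑ y, q y * Real.log (q y / p y))) < 0) := by
  set L : α → ℝ := fun y => Real.log (p y / q y) with hLdef
  have key : ∀ y, Real.log (q y / p y) = - L y := by
    intro y
    have h1 : L y = Real.log (p y) - Real.log (q y) := Real.log_div (hp y).ne' (hq y).ne'
    rw [Real.log_div (hq y).ne' (hp y).ne', h1]
    ring
  have hsum2 : (∑ y, q y * Real.log (q y / p y)) = - ∑ y, q y * L y := by
    rw [← Finset.sum_neg_distrib]
    exact Finset.sum_congr rfl fun y _ => by rw [key y]; ring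
  have hKL : dl * ((∑ y, p y * L y) + (∑ y, q y * Real.log (q y / p y)))
      = dl * ((∑ y, p y * L y) - (∑ y, q y * L y)) := by
    rw [hsum2]; ring
  constructor
  · -- derivative part
    have hderiv : HasDerivAt (fun lam : ℝ => ∑ y, ∑ y', p y * q y' *
        ℓ (lam * L y - lam * L y'))
        (∑ y, ∑ y', p y * q y' * (dl * (L y - L y'))) 0 := by
      apply HasDerivAt.fun_sum
      intro y _
      apply HasDerivAt.fun_sum
      intro y' _
      have hinner : HasDerivAt (fun lam : ℝ => lam * L y - lam * L y') (L y - L y') 0 := by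
        simpa using ((hasDerivAt_id (0:ℝ)).mul_const (L y)).fun_sub
          ((hasDerivAt_id (0:ℝ)).mul_const (L y'))
      have h0 : (fun lam : ℝ => lam * L y - lam * L y') 0 = 0 := by simp
      have hcomp : HasDerivAt (fun lam : ℝ => ℓ (lam * L y - lam * L y'))
          (dl * (L y - L y')) 0 := by
        have := HasDerivAt.comp (0:ℝ) (h0 ▸ hℓ) hinner
        exact this
      simpa [mul_comm, mul_assoc, mul_left_comm] using hcomp.const_mul (p y * q y')
    have hval : (∑ y, ∑ y', p y * q y' * (dl * (L y - L y')))
        = dl * ((∑ y, p y * L y) - (∑ y, q y * L y)) := by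
      have step : ∀ y, (∑ y', p y * q y' * (dl * (L y - L y')))
          = (p y * dl * L y) * (∑ y', q y') - (p y * dl) * (∑ y', q y' * L y') := by
        intro y
        rw [Finset.mul_sum, Finset.mul_sum, ← Finset.sum_sub_distrib]
        exact Finset.sum_congr rfl fun y' _ => by ring
      have e2 : ∑ x : α, p x * dl * (∑ y', q y' * L y') = dl * ∑ y', q y' * L y' := by
        rw [← Finset.sum_mul, ← Finset.sum_mul, hp1, one_mul]
      rw [Finset.sum_congr rfl fun y _ => step y, hq1]
      simp only [mul_one]
      rw [Finset.sum_sub_distrib, e2, mul_sub]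
      congr 1
      rw [Finset.mul_sum]
      exact Finset.sum_congr rfl fun y _ => by ring
    rw [hKL, ← hval]
    exact hderiv
  · -- negativity
    intro hne
    rw [hKL]
    apply mul_neg_of_neg_of_pos hdl
    have hrw : (∑ y, p y * L y) - (∑ y, q y * L y) = ∑ y, (p y - q y) * L y := by
      rw [← Finset.sum_sub_distrib]
      exact Finset.sum_congr rfl fun y _ => by ring
    rw [hrw]
    have hnonneg : ∀ y : α, 0 ≤ (p y - q y) * L y := by
      intro y
      rcases lt_trichotomy (p y) (q y) with h | h | h
      · have h1 : L y < 0 := Real.log_neg (div_pos (hp y) (hq y))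
          ((div_lt_one (hq y)).mpr h)
        have h2 : p y - q y < 0 := by linarith
        exact le_of_lt (mul_pos_of_neg_of_neg h2 h1)
      · simp [h]
      · have h1 : 0 < L y := Real.log_pos ((one_lt_div (hq y)).mpr h)
        have h2 : 0 < p y - q y := by linarith
        exact le_of_lt (mul_pos h2 h1)
    obtain ⟨y0, hy0⟩ : ∃ y, p y ≠ q y := by
      by_contra h
      push_neg at h
      exact hne (funext h)
    have hpos : 0 < (p y0 - q y0) * L y0 := by
      rcases lt_or_gt_of_ne hy0 with h | h
      · have h1 : L y0 < 0 := Real.log_neg (div_pos (hp y0) (hq y0))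
          ((div_lt_one (hq y0)).mpr h)
        exact mul_pos_of_neg_of_neg (by linarith) h1
      · have h1 : 0 < L y0 := Real.log_pos ((one_lt_div (hq y0)).mpr h)
        exact mul_pos (by linarith) h1
    exact Finset.sum_pos' (fun y _ => hnonneg y) ⟨y0, Finset.mem_univ y0, hpos⟩
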